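/- Let Q̄ ∈ ℝ^{2m×2m} be symmetric and let F̄ = [Ḡ H̄] ∈ ℝ^{2m×n} be block-column partitioned with Ḡ ∈ ℝ^{2m×n_y} (the first n_y columns). Assume the symmetric matrix F̄ᵀQ̄F̄ has a negative smallest eigenvalue, λ_min(F̄ᵀQ̄F̄) < 0, and set L := max(1, |λ_min(F̄ᵀQ̄F̄)|^{−1/2}). Then for every x = (y, x̄) ∈ ℝ^{n_y} × ℝ^{n−n_y}, every v ∈ ℝ^{n_y}, and every ε ∈ ℝ satisfying (F̄x + Ḡv)ᵀ Q̄ (F̄x + Ḡv) ≤ ε², there exists x'' ∈ ℝ^n such that (x − x'')ᵀ F̄ᵀ Q̄ F̄ (x − x'') ≤ 0 and ‖x''‖² ≤ 2L²(‖v‖² + ε²). -/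

import Mathlib

open Matrix

/-- The smallest (real) eigenvalue of a real square matrix, as the infimum of its
real spectrum (for symmetric matrices this is the smallest eigenvalue). -/
noncomputable def lmin {ι : Type*} [Fintype ι] [DecidableEq ι]
    (A : Matrix ι ι ℝ) : ℝ :=
  sInf (spectrum ℝ A)

/-- Jump-set perturbation bound for `D₂` (proof of Lemma 1 of the paper, case `i = 2`,
`L_D = √2·L`): if `λ_min(F̄ᵀQ̄F̄) < 0` and `(F̄x + Ḡv)ᵀ Q̄ (F̄x + Ḡv) ≤ ε²`, then there is
`x''` with `(x − x'')ᵀ F̄ᵀ Q̄ F̄ (x − x'') ≤ 0` and `‖x''‖² ≤ 2L²(‖v‖² + ε²)`,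
where `L = max(1, |λ_min(F̄ᵀQ̄F̄)|^{-1/2})`. -/
theorem jump_set_D2_perturbation {m ny k : ℕ}
    (Qb : Matrix (Fin (2 * m)) (Fin (2 * m)) ℝ) (hQb : Qb.IsSymm)
    (Fb : Matrix (Fin (2 * m)) (Fin ny ⊕ Fin k) ℝ)
    (hneg : lmin (Fbᵀ * Qb * Fb) < 0)
    (y : Fin ny → ℝ) (xb : Fin k → ℝ) (v : Fin ny → ℝ) (ε : ℝ)
    (hD2 : let Gb : Matrix (Fin (2 * m)) (Fin ny) ℝ := Fb.submatrix id Sum.inl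
           let x : Fin ny ⊕ Fin k → ℝ := Sum.elim y xb
           (Fb *ᵥ x + Gb *ᵥ v) ⬝ᵥ (Qb *ᵥ (Fb *ᵥ x + Gb *ᵥ v)) ≤ ε ^ 2) :
    let x : Fin ny ⊕ Fin k → ℝ := Sum.elim y xb
    let L : ℝ := max 1 (Real.sqrt |lmin (Fbᵀ * Qb * Fb)|)⁻¹
    ∃ x'' : Fin ny ⊕ Fin k → ℝ,
      (x - x'') ⬝ᵥ ((Fbᵀ * Qb * Fb) *ᵥ (x - x'')) ≤ 0 ∧
        x'' ⬝ᵥ x'' ≤ 2 * L ^ 2 * (v ⬝ᵥ v + ε ^ 2) := by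
  intro x L
  set M : Matrix (Fin ny ⊕ Fin k) (Fin ny ⊕ Fin k) ℝ := Fbᵀ * Qb * Fb with hMdef
  have hMsymm : M.IsSymm := by
    show Mᵀ = M
    rw [hMdef, Matrix.transpose_mul, Matrix.transpose_mul, Matrix.transpose_transpose,
      hQb.eq, Matrix.mul_assoc]
  have hMherm : M.IsHermitian := by
    show Mᴴ = M
    rw [Matrix.conjTranspose_eq_transpose_of_trivial]
    exact hMsymm
  -- the minimal eigenvalue is attained
  have hlneg : lmin M < 0 := hneg
  have hfin : (spectrum ℝ M).Finite := M.finite_real_spectrum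
  have hne : (spectrum ℝ M).Nonempty := by
    by_contra h
    rw [Set.not_nonempty_iff_eq_empty] at h
    have : lmin M = 0 := by rw [lmin, h, Real.sInf_empty]
    linarith
  have hmem : lmin M ∈ spectrum ℝ M := hne.csInf_mem hfin
  rw [hMherm.spectrum_real_eq_range_eigenvalues] at hmem
  obtain ⟨i, hi⟩ := hmem
  set u : Fin ny ⊕ Fin k → ℝ := ⇑(hMherm.eigenvectorBasis i) with hudef
  have hu : M *ᵥ u = lmin M • u := by
    rw [hudef, hMherm.mulVec_eigenvectorBasis, hi]
  have huu : u ⬝ᵥ u = 1 := by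
    have h1 : ‖hMherm.eigenvectorBasis i‖ = 1 :=
      hMherm.eigenvectorBasis.orthonormal.1 i
    have h2 : (inner ℝ (hMherm.eigenvectorBasis i) (hMherm.eigenvectorBasis i) : ℝ) = 1 := by
      rw [real_inner_self_eq_norm_sq, h1]; norm_num
    rw [PiLp.inner_apply] at h2
    simpa [dotProduct, hudef, ← sq] using h2
  -- the shifted state
  set vt : Fin ny ⊕ Fin k → ℝ := Sum.elim v 0 with hvt
  set z : Fin ny ⊕ Fin k → ℝ := x + vt with hz
  have hsymmdot : ∀ a b : Fin ny ⊕ Fin k → ℝ, a ⬝ᵥ (M *ᵥ b) = (M *ᵥ a) ⬝ᵥ b := by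
    intro a b
    rw [Matrix.dotProduct_mulVec, ← Matrix.mulVec_transpose, hMsymm.eq]
  have hq : z ⬝ᵥ (M *ᵥ z) ≤ ε ^ 2 := by
    have hGb : (Fb.submatrix id Sum.inl) *ᵥ v = Fb *ᵥ vt := by
      ext j
      simp [Matrix.mulVec, dotProduct, Fintype.sum_sum_type, hvt]
    have hFz : Fb *ᵥ x + (Fb.submatrix id Sum.inl) *ᵥ v = Fb *ᵥ z := by
      rw [hGb, hz, Matrix.mulVec_add]
    have hcalc : z ⬝ᵥ (M *ᵥ z) = (Fb *ᵥ z) ⬝ᵥ (Qb *ᵥ (Fb *ᵥ z)) := by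
      rw [hMdef, ← Matrix.mulVec_mulVec, ← Matrix.mulVec_mulVec,
        Matrix.dotProduct_mulVec, Matrix.vecMul_transpose]
    rw [hcalc, ← hFz]
    exact hD2
  -- constants
  have habs : |lmin M| = -lmin M := abs_of_neg hlneg
  have habspos : (0 : ℝ) < |lmin M| := abs_pos.2 (ne_of_lt hlneg)
  have hsqrtpos : 0 < Real.sqrt |lmin M| := Real.sqrt_pos.2 habspos
  set c : ℝ := u ⬝ᵥ (M *ᵥ z) with hc
  set s : ℝ := (if 0 ≤ c then |ε| else -|ε|) / Real.sqrt |lmin M| with hs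
  have hsc : 0 ≤ s * c := by
    rcases le_or_gt 0 c with h | h
    · have : 0 ≤ s := by
        rw [hs, if_pos h]
        positivity
      exact mul_nonneg this h
    · have : s ≤ 0 := by
        rw [hs, if_neg (not_le.2 h)]
        apply div_nonpos_of_nonpos_of_nonneg
        · simp [abs_nonneg]
        · exact hsqrtpos.le
      have := mul_nonneg (neg_nonneg.2 this) (neg_nonneg.2 h.le)
      nlinarith [this]
  have hs2 : s ^ 2 = ε ^ 2 / |lmin M| := by
    rw [hs, div_pow, Real.sq_sqrt habspos.le]
    congr 1
    rcases le_or_gt 0 c with h | h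
    · rw [if_pos h, sq_abs]
    · rw [if_neg (not_le.2 h), neg_pow, sq_abs]
      ring
  -- dot product identities
  have hcz : z ⬝ᵥ (M *ᵥ u) = c := by
    rw [hc, hsymmdot u z, dotProduct_comm]
  have hcu : u ⬝ᵥ (M *ᵥ u) = lmin M := by
    rw [hu, dotProduct_smul, smul_eq_mul, huu, mul_one]
  refine ⟨-vt + s • u, ?_, ?_⟩
  · -- non-triggering cone membership
    have hxd : x - (-vt + s • u) = z - s • u := by
      funext j
      simp [hz]
      ring
    have expand : (z - s • u) ⬝ᵥ (M *ᵥ (z - s • u))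
        = z ⬝ᵥ (M *ᵥ z) - 2 * (s * c) + s ^ 2 * lmin M := by
      simp only [Matrix.mulVec_sub, Matrix.mulVec_smul, sub_dotProduct,
        dotProduct_sub, dotProduct_smul, smul_dotProduct,
        smul_eq_mul, hcz, hcu, ← hc]
      ring
    have hsl : s ^ 2 * lmin M = -ε ^ 2 := by
      have hne0 : lmin M ≠ 0 := ne_of_lt hlneg
      rw [hs2, habs, div_neg, neg_mul, div_mul_cancel₀ _ hne0]
    rw [hxd, expand, hsl]
    linarith
  · -- norm bound
    have hvtv : vt ⬝ᵥ vt = v ⬝ᵥ v := by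
      simp [hvt, dotProduct, Fintype.sum_sum_type]
    have e1 : (-vt + s • u) ⬝ᵥ (-vt + s • u)
        = vt ⬝ᵥ vt - 2 * s * (vt ⬝ᵥ u) + s ^ 2 := by
      simp only [add_dotProduct, dotProduct_add, neg_dotProduct,
        dotProduct_neg, smul_dotProduct, dotProduct_smul,
        smul_eq_mul, huu, dotProduct_comm u vt]
      ring
    have e2 : (0 : ℝ) ≤ vt ⬝ᵥ vt + 2 * s * (vt ⬝ᵥ u) + s ^ 2 := by
      have h0 : (0 : ℝ) ≤ (vt + s • u) ⬝ᵥ (vt + s • u) :=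
        Finset.sum_nonneg fun j _ => mul_self_nonneg _
      have e3 : (vt + s • u) ⬝ᵥ (vt + s • u)
          = vt ⬝ᵥ vt + 2 * s * (vt ⬝ᵥ u) + s ^ 2 := by
        simp only [add_dotProduct, dotProduct_add, smul_dotProduct,
          dotProduct_smul, smul_eq_mul, huu, dotProduct_comm u vt]
        ring
      rw [e3] at h0
      exact h0
    have hL1 : (1 : ℝ) ≤ L := le_max_left _ _
    have hL2 : (Real.sqrt |lmin M|)⁻¹ ≤ L := le_max_right _ _
    have hLinv : |lmin M|⁻¹ ≤ L ^ 2 := by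
      have h1 : ((Real.sqrt |lmin M|)⁻¹) ^ 2 ≤ L ^ 2 := by
        apply pow_le_pow_left₀ (by positivity) hL2
      rw [inv_pow, Real.sq_sqrt habspos.le] at h1
      exact h1
    have hL1sq : (1 : ℝ) ≤ L ^ 2 := by nlinarith [hL1]
    have hvv0 : (0 : ℝ) ≤ v ⬝ᵥ v := Finset.sum_nonneg fun j _ => mul_self_nonneg _
    have hss : s ^ 2 ≤ L ^ 2 * ε ^ 2 := by
      rw [hs2, div_eq_mul_inv]
      have h2 := mul_le_mul_of_nonneg_left hLinv (sq_nonneg ε)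
      linarith
    calc (-vt + s • u) ⬝ᵥ (-vt + s • u)
        ≤ 2 * (vt ⬝ᵥ vt) + 2 * s ^ 2 := by linarith
      _ = 2 * (v ⬝ᵥ v) + 2 * s ^ 2 := by rw [hvtv]
      _ ≤ 2 * L ^ 2 * (v ⬝ᵥ v + ε ^ 2) := by
          have h1 := mul_le_mul_of_nonneg_right hL1sq hvv0
          nlinarith [h1, hss]
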